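/- Let f : [0,1] → [0,∞) satisfy f(p) = f(1−p) for all p ∈ [0,1], with p ↦ f(p)/p non-increasing on (0,1]. Let 0 ≤ p_1 ≤ … ≤ p_m ≤ 1, let 0 ≤ k ≤ m−2 and k+2 ≤ i ≤ m. Then p_{k+1}·C_f(m−k−1; p_{−(k+1)}) − p_i·C_f(m−k−1; p_{−i}) ≤ (p_{k+1} − p_i)·C_f(m−k−1; p_{−(k+1,i)}) + p_{k+1}·f(p_i) − p_i·f(p_{k+1}), where p_{−(k+1,i)} denotes the list with both entries k+1 and i removed. -/

import Mathlib

/-- The optimal expected cost `C_f(θ; p)` of sequentially computing the Boolean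
threshold function `Π_θ` on independent Bernoulli variables with parameters given by
the list `p`, where querying a node with parameter `q` costs `f q`.
`cost f θ p = 0` if `θ = 0` or `θ > p.length`, and otherwise it is the minimum over
nodes `i` of `f p_i + p_i • cost f (θ-1) p_{-i} + (1 - p_i) • cost f θ p_{-i}`. -/
noncomputable def cost (f : ℝ → ℝ) : ℕ → List ℝ → ℝ
  | 0, _ => 0
  | (θ+1), p =>
      if p.length < θ + 1 then 0
      else ⨅ i : Fin p.length,
        (f (p.get i) + p.get i * cost f θ (p.eraseIdx i.1)
          + (1 - p.get i) * cost f (θ+1) (p.eraseIdx i.1))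
termination_by θ p => p.length
decreasing_by
  all_goals (have h := i.isLt; simp [List.length_eraseIdx, h]; omega)

def Mem01 (l : List ℝ) : Prop := ∀ x ∈ l, x ∈ Set.Icc (0:ℝ) 1

lemma cost_zero (f : ℝ → ℝ) (p : List ℝ) : cost f 0 p = 0 := by rw [cost]

lemma cost_succ (f : ℝ → ℝ) (θ : ℕ) (p : List ℝ) :
    cost f (θ+1) p = if p.length < θ + 1 then 0
      else ⨅ i : Fin p.length,
        (f (p.get i) + p.get i * cost f θ (p.eraseIdx i.1)
          + (1 - p.get i) * cost f (θ+1) (p.eraseIdx i.1)) := by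
  rw [cost]

lemma cost_of_lt (f : ℝ → ℝ) {θ : ℕ} {p : List ℝ} (h : p.length < θ) : cost f θ p = 0 := by
  cases θ with
  | zero => exact cost_zero f p
  | succ t => rw [cost_succ, if_pos h]

lemma length_eraseIdx' {l : List ℝ} {i : ℕ} (h : i < l.length) :
    (l.eraseIdx i).length = l.length - 1 := by
  simp [List.length_eraseIdx, h]

lemma mem01_eraseIdx {l : List ℝ} (h : Mem01 l) (i : ℕ) : Mem01 (l.eraseIdx i) :=
  fun x hx => h x ((List.eraseIdx_sublist l i).subset hx)

lemma sorted_eraseIdx {l : List ℝ} (h : l.Pairwise (· ≤ ·)) (i : ℕ) :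
    (l.eraseIdx i).Pairwise (· ≤ ·) :=
  List.Pairwise.sublist (List.eraseIdx_sublist l i) h

lemma mem01_getElem {l : List ℝ} (h : Mem01 l) {j : ℕ} (hj : j < l.length) :
    l[j] ∈ Set.Icc (0:ℝ) 1 := h _ (List.getElem_mem hj)

lemma getElem_congr' (l : List ℝ) {i j : ℕ} (h : i = j) (hi : i < l.length) (hj : j < l.length) :
    l[i]'hi = l[j]'hj := by subst h; rfl

lemma cost_nonneg (f : ℝ → ℝ) (hf0 : ∀ x ∈ Set.Icc (0:ℝ) 1, 0 ≤ f x) :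
    ∀ (n : ℕ) (p : List ℝ), p.length ≤ n → Mem01 p → ∀ θ, 0 ≤ cost f θ p := by
  intro n
  induction n with
  | zero =>
    intro p hp hm θ
    cases θ with
    | zero => rw [cost_zero]
    | succ t => rw [cost_of_lt f (by omega)]
  | succ n ih =>
    intro p hp hm θ
    cases θ with
    | zero => rw [cost_zero]
    | succ t =>
      rw [cost_succ]
      split
      · exact le_refl 0
      · apply Real.iInf_nonneg
        intro i
        have hmem : p.get i ∈ Set.Icc (0:ℝ) 1 := by
          rw [List.get_eq_getElem]; exact mem01_getElem hm i.2
        have h1 : (p.eraseIdx i.1).length ≤ n := by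
          rw [length_eraseIdx' i.2]; omega
        have h2 := mem01_eraseIdx hm i.1
        have hc1 := ih _ h1 h2 t
        have hc2 := ih _ h1 h2 (t+1)
        have hfv := hf0 _ hmem
        obtain ⟨h01, h11⟩ := hmem
        have := mul_nonneg h01 hc1
        have := mul_nonneg (by linarith : (0:ℝ) ≤ 1 - p.get i) hc2
        linarith

lemma cost_nonneg' (f : ℝ → ℝ) (hf0 : ∀ x ∈ Set.Icc (0:ℝ) 1, 0 ≤ f x)
    {p : List ℝ} (hm : Mem01 p) (θ : ℕ) : 0 ≤ cost f θ p :=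
  cost_nonneg f hf0 p.length p le_rfl hm θ

lemma cost_le_dev (f : ℝ → ℝ) {p : List ℝ} {θ j : ℕ}
    (hlen : θ + 1 ≤ p.length) (hj : j < p.length) :
    cost f (θ+1) p ≤ f (p[j]) + p[j] * cost f θ (p.eraseIdx j)
      + (1 - p[j]) * cost f (θ+1) (p.eraseIdx j) := by
  rw [cost_succ, if_neg (by omega)]
  have hb : BddBelow (Set.range fun i : Fin p.length =>
      (f (p.get i) + p.get i * cost f θ (p.eraseIdx i.1)
        + (1 - p.get i) * cost f (θ+1) (p.eraseIdx i.1))) :=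
    (Set.finite_range _).bddBelow
  have := ciInf_le hb ⟨j, hj⟩
  simpa using this

lemma le_cost (f : ℝ → ℝ) {p : List ℝ} {θ : ℕ} {c : ℝ}
    (hlen : θ + 1 ≤ p.length)
    (h : ∀ j (hj : j < p.length), c ≤ f (p[j]) + p[j] * cost f θ (p.eraseIdx j)
      + (1 - p[j]) * cost f (θ+1) (p.eraseIdx j)) :
    c ≤ cost f (θ+1) p := by
  rw [cost_succ, if_neg (by omega)]
  have : Nonempty (Fin p.length) := ⟨⟨0, by omega⟩⟩
  exact le_ciInf fun i => by simpa using h i.1 i.2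

lemma getElem_eraseIdx_lt (l : List ℝ) {i j : ℕ} (hij : j < i)
    (h2 : j < (l.eraseIdx i).length) (h3 : j < l.length) :
    (l.eraseIdx i)[j]'h2 = l[j]'h3 := by
  rw [List.getElem_eraseIdx, dif_pos hij]

lemma getElem_eraseIdx_ge (l : List ℝ) {i j : ℕ} (hij : i ≤ j)
    (h2 : j < (l.eraseIdx i).length) (h3 : j + 1 < l.length) :
    (l.eraseIdx i)[j]'h2 = l[j+1]'h3 := by
  rw [List.getElem_eraseIdx, dif_neg (by omega)]

lemma eraseIdx_eraseIdx (l : List ℝ) {i j : ℕ} (hij : i < j) (hj : j < l.length) :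
    (l.eraseIdx j).eraseIdx i = (l.eraseIdx i).eraseIdx (j-1) := by
  have e1 : (l.eraseIdx j).length = l.length - 1 := length_eraseIdx' hj
  have e2 : (l.eraseIdx i).length = l.length - 1 := length_eraseIdx' (by omega)
  have e3 : ((l.eraseIdx j).eraseIdx i).length = l.length - 2 := by
    rw [length_eraseIdx' (by omega), e1]; omega
  have e4 : ((l.eraseIdx i).eraseIdx (j-1)).length = l.length - 2 := by
    rw [length_eraseIdx' (by omega), e2]; omega
  apply List.ext_getElem (by omega)
  intro n h1 h2
  have hn : n < l.length - 2 := by omega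
  simp only [List.getElem_eraseIdx]
  split_ifs <;>
    first
      | rfl | omega | (apply getElem_congr'; omega)
      | (rw [dif_pos (by omega)])
      | (rw [dif_pos (by omega)]; apply getElem_congr'; omega)
      | (rw [dif_neg (by omega), dif_pos (by omega)])
      | (rw [dif_neg (by omega), dif_pos (by omega)]; apply getElem_congr'; omega)
      | (rw [dif_neg (by omega), dif_neg (by omega)])
      | (rw [dif_neg (by omega), dif_neg (by omega)]; apply getElem_congr'; omega)

/-! ### Duality -/

def dualL (l : List ℝ) : List ℝ := (l.map (fun x => 1 - x)).reverse

@[simp] lemma dualL_length (l : List ℝ) : (dualL l).length = l.length := by simp [dualL]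

lemma dualL_getElem (l : List ℝ) {j : ℕ} (hj : j < (dualL l).length)
    (h2 : l.length - 1 - j < l.length) :
    (dualL l)[j]'hj = 1 - l[l.length - 1 - j]'h2 := by
  simp [dualL, List.getElem_reverse, List.getElem_map]

lemma dualL_mem01 {l : List ℝ} (h : Mem01 l) : Mem01 (dualL l) := by
  intro x hx
  simp only [dualL, List.mem_reverse, List.mem_map] at hx
  obtain ⟨y, hy, rfl⟩ := hx
  obtain ⟨h0, h1⟩ := h y hy
  constructor <;> simp <;> linarith

lemma dualL_sorted {l : List ℝ} (h : l.Pairwise (· ≤ ·)) : (dualL l).Pairwise (· ≤ ·) := by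
  rw [List.pairwise_iff_getElem] at h ⊢
  intro i j hi hj hij
  have hi' : i < (dualL l).length := hi
  have hj' : j < (dualL l).length := hj
  have hlen : (dualL l).length = l.length := dualL_length l
  have hin : l.length - 1 - i < l.length := by omega
  have hjn : l.length - 1 - j < l.length := by omega
  rw [dualL_getElem l hi hin, dualL_getElem l hj hjn]
  have : l[l.length - 1 - j]'hjn ≤ l[l.length - 1 - i]'hin := by
    rcases eq_or_lt_of_le (show l.length - 1 - j ≤ l.length - 1 - i by omega) with he | hlt
    · exact le_of_eq (getElem_congr' l he hjn hin)
    · exact h _ _ hjn hin hlt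
  linarith

lemma dualL_eraseIdx (l : List ℝ) {i : ℕ} (hi : i < l.length) :
    dualL (l.eraseIdx i) = (dualL l).eraseIdx (l.length - 1 - i) := by
  have hL : (dualL (l.eraseIdx i)).length = l.length - 1 := by
    rw [dualL_length, length_eraseIdx' hi]
  have hR : ((dualL l).eraseIdx (l.length - 1 - i)).length = l.length - 1 := by
    rw [length_eraseIdx' (by simp; omega), dualL_length]
  apply List.ext_getElem (by omega)
  intro n h1 h2
  have hn : n < l.length - 1 := by omega
  have hei : (l.eraseIdx i).length = l.length - 1 := length_eraseIdx' hi
  rw [dualL_getElem _ h1 (by omega)]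
  rw [List.getElem_eraseIdx]
  split_ifs with hc
  · rw [List.getElem_eraseIdx, dif_neg (by omega),
      dualL_getElem _ (by simp [List.length_eraseIdx]; omega) (by omega)]
    congr 1
    exact getElem_congr' l (by omega) _ _
  · rw [List.getElem_eraseIdx, dif_pos (by omega),
      dualL_getElem _ (by simp; omega) (by omega)]
    congr 1
    exact getElem_congr' l (by omega) _ _

lemma term_congr (f : ℝ → ℝ) (l : List ℝ) (c d : ℕ) {j₁ j₂ : ℕ} (h : j₁ = j₂)
    (h₁ : j₁ < l.length) (h₂ : j₂ < l.length) :
    f (l[j₁]'h₁) + l[j₁]'h₁ * cost f c (l.eraseIdx j₁)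
      + (1 - l[j₁]'h₁) * cost f d (l.eraseIdx j₁)
    = f (l[j₂]'h₂) + l[j₂]'h₂ * cost f c (l.eraseIdx j₂)
      + (1 - l[j₂]'h₂) * cost f d (l.eraseIdx j₂) := by
  subst h; rfl

lemma cost_dual (f : ℝ → ℝ) (hf_sym : ∀ x ∈ Set.Icc (0:ℝ) 1, f x = f (1 - x)) :
    ∀ (n : ℕ) (l : List ℝ), l.length ≤ n → Mem01 l → ∀ θ,
      cost f θ l = cost f (l.length + 1 - θ) (dualL l) := by
  intro n
  induction n with
  | zero =>
    intro l hl hm θ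
    cases θ with
    | zero => rw [cost_zero, cost_of_lt f (by simp)]
    | succ t =>
      rw [cost_of_lt f (by omega), show l.length + 1 - (t+1) = 0 by omega, cost_zero]
  | succ n ih =>
    intro l hl hm θ
    cases θ with
    | zero => rw [cost_zero, cost_of_lt f (by simp)]
    | succ t =>
      by_cases hdeg : l.length < t + 1
      · rw [cost_of_lt f hdeg, show l.length + 1 - (t+1) = 0 by omega, cost_zero]
      · push_neg at hdeg
        set N := l.length with hN
        have hNpos : 1 ≤ N := by omega
        have hu : N + 1 - (t+1) = (N - t - 1) + 1 := by omega
        rw [hu, cost_succ, cost_succ, if_neg (by omega), if_neg (by simp [hN.symm]; omega)]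
        have key : ∀ (j : ℕ) (hj : j < N),
            f (l[j]'hj) + l[j]'hj * cost f t (l.eraseIdx j)
              + (1 - l[j]'hj) * cost f (t+1) (l.eraseIdx j)
            = f ((dualL l)[N-1-j]'(by simp [hN.symm]; omega))
              + ((dualL l)[N-1-j]'(by simp [hN.symm]; omega)) * cost f (N-t-1) ((dualL l).eraseIdx (N-1-j))
              + (1 - (dualL l)[N-1-j]'(by simp [hN.symm]; omega)) * cost f ((N-t-1)+1) ((dualL l).eraseIdx (N-1-j)) := by
          intro j hj
          have hd : (dualL l)[N-1-j]'(by simp [hN.symm]; omega) = 1 - l[j]'hj := by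
            rw [dualL_getElem l _ (by omega)]
            congr 1
            exact getElem_congr' l (by omega) _ _
          have he : (dualL l).eraseIdx (N-1-j) = dualL (l.eraseIdx j) :=
            (dualL_eraseIdx l hj).symm
          have hlen' : (l.eraseIdx j).length = N - 1 := length_eraseIdx' hj
          have ih1 : cost f (N-t-1) (dualL (l.eraseIdx j)) = cost f (t+1) (l.eraseIdx j) := by
            rw [ih (l.eraseIdx j) (by omega) (mem01_eraseIdx hm j) (t+1), hlen',
              show N - 1 + 1 - (t+1) = N - t - 1 by omega]
          have ih2 : cost f ((N-t-1)+1) (dualL (l.eraseIdx j)) = cost f t (l.eraseIdx j) := by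
            rw [ih (l.eraseIdx j) (by omega) (mem01_eraseIdx hm j) t, hlen',
              show N - 1 + 1 - t = N - t - 1 + 1 by omega]
          have hsym : f (1 - l[j]'hj) = f (l[j]'hj) := (hf_sym _ (mem01_getElem hm hj)).symm
          rw [hd, he, ih1, ih2, hsym]
          ring
        have hne1 : Nonempty (Fin (dualL l).length) := ⟨⟨0, by simp only [dualL_length]; omega⟩⟩
        have hne2 : Nonempty (Fin l.length) := ⟨⟨0, by omega⟩⟩
        apply le_antisymm
        · apply le_ciInf
          intro i
          have hiN : i.1 < N := by have := i.2; simpa using this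
          refine le_trans (ciInf_le ((Set.finite_range _).bddBelow) ⟨N-1-i.1, by omega⟩) ?_
          have hK := (key (N-1-i.1) (by omega)).trans
            (term_congr f (dualL l) _ _ (show N-1-(N-1-i.1) = i.1 by omega)
              (by simp only [dualL_length]; omega) (by simp only [dualL_length]; omega))
          exact le_of_eq (by simpa using hK)
        · apply le_ciInf
          intro i
          refine le_trans (ciInf_le ((Set.finite_range _).bddBelow) ⟨N-1-i.1, by simp [hN.symm]; omega⟩) ?_
          have hK := key i.1 i.2
          exact le_of_eq (by simpa using hK.symm)

lemma dev_dual (f : ℝ → ℝ) (hf_sym : ∀ x ∈ Set.Icc (0:ℝ) 1, f x = f (1 - x))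
    {l : List ℝ} (hm : Mem01 l) (n : ℕ) (hln : l.length = n) {t j : ℕ}
    (ht : t + 1 ≤ n) (hj : j < n) :
    f (l[j]'(by omega)) + l[j]'(by omega) * cost f t (l.eraseIdx j)
      + (1 - l[j]'(by omega)) * cost f (t+1) (l.eraseIdx j)
    = f ((dualL l)[n-1-j]'(by simp only [dualL_length]; omega))
      + ((dualL l)[n-1-j]'(by simp only [dualL_length]; omega)) * cost f (n-(t+1)) ((dualL l).eraseIdx (n-1-j))
      + (1 - (dualL l)[n-1-j]'(by simp only [dualL_length]; omega)) * cost f (n-(t+1)+1) ((dualL l).eraseIdx (n-1-j)) := by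
  subst hln
  have hjl : j < l.length := hj
  have hd : (dualL l)[l.length-1-j]'(by simp only [dualL_length]; omega) = 1 - l[j]'hjl := by
    rw [dualL_getElem l _ (by omega)]
    congr 1
    exact getElem_congr' l (by omega) _ _
  have he : (dualL l).eraseIdx (l.length-1-j) = dualL (l.eraseIdx j) :=
    (dualL_eraseIdx l hjl).symm
  have hlen' : (l.eraseIdx j).length = l.length - 1 := length_eraseIdx' hjl
  have c1 : cost f t (l.eraseIdx j) = cost f (l.length-(t+1)+1) (dualL (l.eraseIdx j)) := by
    rw [cost_dual f hf_sym (l.eraseIdx j).length (l.eraseIdx j) le_rfl (mem01_eraseIdx hm j) t,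
      hlen', show l.length - 1 + 1 - t = l.length-(t+1)+1 by omega]
  have c2 : cost f (t+1) (l.eraseIdx j) = cost f (l.length-(t+1)) (dualL (l.eraseIdx j)) := by
    rw [cost_dual f hf_sym (l.eraseIdx j).length (l.eraseIdx j) le_rfl (mem01_eraseIdx hm j) (t+1),
      hlen', show l.length - 1 + 1 - (t+1) = l.length-(t+1) by omega]
  have hsym : f (1 - l[j]'hjl) = f (l[j]'hjl) := (hf_sym _ (mem01_getElem hm hjl)).symm
  rw [hd, he, c1, c2, hsym]
  ring

lemma cross_mul (f : ℝ → ℝ) (hf0 : ∀ x ∈ Set.Icc (0:ℝ) 1, 0 ≤ f x)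
    (hf_mono : AntitoneOn (fun x => f x / x) (Set.Ioc (0:ℝ) 1))
    {a b : ℝ} (ha : a ∈ Set.Icc (0:ℝ) 1) (hb : b ∈ Set.Icc (0:ℝ) 1) (hab : a ≤ b) :
    a * f b ≤ b * f a := by
  rcases eq_or_lt_of_le ha.1 with h0 | h0
  · have h0' : a = 0 := h0.symm
    subst h0'
    have : (0:ℝ) ≤ b * f 0 := mul_nonneg (by linarith [hb.1]) (hf0 0 ha)
    simpa using this
  · have hb0 : (0:ℝ) < b := lt_of_lt_of_le h0 hab
    have := hf_mono (Set.mem_Ioc.mpr ⟨h0, ha.2⟩) (Set.mem_Ioc.mpr ⟨hb0, hb.2⟩) hab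
    simp only at this
    rw [div_le_div_iff₀ hb0 h0] at this
    linarith

lemma cross_one (f : ℝ → ℝ) (hf0 : ∀ x ∈ Set.Icc (0:ℝ) 1, 0 ≤ f x)
    (hf_sym : ∀ x ∈ Set.Icc (0:ℝ) 1, f x = f (1 - x))
    (hf_mono : AntitoneOn (fun x => f x / x) (Set.Ioc (0:ℝ) 1))
    {a b : ℝ} (ha : a ∈ Set.Icc (0:ℝ) 1) (hb : b ∈ Set.Icc (0:ℝ) 1) (hab : a ≤ b) :
    (1 - b) * f a ≤ (1 - a) * f b := by
  rcases eq_or_lt_of_le hb.2 with h1 | h1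
  · subst h1
    have : (0:ℝ) ≤ (1 - a) * f 1 := mul_nonneg (by linarith [ha.2]) (hf0 1 hb)
    simpa using this
  · have hb1 : (0:ℝ) < 1 - b := by linarith
    have ha1 : (0:ℝ) < 1 - a := by linarith
    have := hf_mono (Set.mem_Ioc.mpr ⟨hb1, by linarith [hb.1]⟩)
      (Set.mem_Ioc.mpr ⟨ha1, by linarith [ha.1]⟩) (by linarith)
    simp only at this
    rw [div_le_div_iff₀ ha1 hb1] at this
    rw [← hf_sym a ha, ← hf_sym b hb] at this
    linarith

lemma sorted_le {l : List ℝ} (hs : l.Pairwise (· ≤ ·)) {i j : ℕ} (hij : i ≤ j)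
    (hj : j < l.length) : l[i]'(by omega) ≤ l[j]'hj := by
  rcases eq_or_lt_of_le hij with h | h
  · exact le_of_eq (getElem_congr' l h _ _)
  · exact List.pairwise_iff_getElem.mp hs i j (by omega) hj h

/-- Optimality of querying the pivot (the θ-th largest entry) first, for sorted lists. -/
def TS (f : ℝ → ℝ) (n : ℕ) : Prop :=
  ∀ (q : List ℝ), q.length = n → q.Pairwise (· ≤ ·) → Mem01 q →
    ∀ t : ℕ, t + 1 ≤ n → ∀ (hv : n - (t+1) < q.length),
      cost f (t+1) q
        = f (q[n-(t+1)]'hv) + q[n-(t+1)]'hv * cost f t (q.eraseIdx (n-(t+1)))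
          + (1 - q[n-(t+1)]'hv) * cost f (t+1) (q.eraseIdx (n-(t+1)))

lemma L2 (f : ℝ → ℝ) (hf0 : ∀ x ∈ Set.Icc (0:ℝ) 1, 0 ≤ f x)
    (hf_sym : ∀ x ∈ Set.Icc (0:ℝ) 1, f x = f (1 - x))
    (hf_mono : AntitoneOn (fun x => f x / x) (Set.Ioc (0:ℝ) 1)) :
    ∀ (M : ℕ), (∀ l, l < M → TS f l) →
    ∀ (P : List ℝ) (hPM : P.length = M), P.Pairwise (· ≤ ·) → Mem01 P →
    ∀ (K J θ : ℕ) (hKJ : K < J) (hJ : J < M) (_hoff : M ≤ θ + K + 1),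
    (1 - P[K]'(by omega)) * cost f θ (P.eraseIdx K)
      - (1 - P[J]'(by omega)) * cost f θ (P.eraseIdx J)
    ≤ (P[J]'(by omega) - P[K]'(by omega)) * cost f (θ-1) ((P.eraseIdx J).eraseIdx K)
      + (1 - P[K]'(by omega)) * f (P[J]'(by omega))
      - (1 - P[J]'(by omega)) * f (P[K]'(by omega)) := by
  intro M
  induction M using Nat.strong_induction_on with
  | _ M ih =>
  intro HT P hPM hs hm K J θ hKJ hJ hoff
  have hKP : K < P.length := by omega
  have hJP : J < P.length := by omega
  have haI := mem01_getElem hm hKP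
  have hbI := mem01_getElem hm hJP
  have hab : P[K]'hKP ≤ P[J]'hJP := sorted_le hs (le_of_lt hKJ) hJP
  have hPhi := cross_one f hf0 hf_sym hf_mono haI hbI hab
  have hmS : Mem01 ((P.eraseIdx J).eraseIdx K) := mem01_eraseIdx (mem01_eraseIdx hm J) K
  have hlenJ : (P.eraseIdx J).length = M - 1 := by rw [length_eraseIdx' hJP]; omega
  have hlenK : (P.eraseIdx K).length = M - 1 := by rw [length_eraseIdx' hKP]; omega
  rcases Nat.eq_zero_or_pos θ with rfl | hθpos
  · rw [cost_zero, cost_zero, show (0:ℕ) - 1 = 0 by omega, cost_zero]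
    linarith [hPhi]
  by_cases hdeg : M ≤ θ
  · rw [cost_of_lt f (by omega), cost_of_lt f (by omega)]
    have hCS := cost_nonneg' f hf0 hmS (θ-1)
    have hba : (0:ℝ) ≤ P[J]'hJP - P[K]'hKP := by linarith
    have := mul_nonneg hba hCS
    linarith [hPhi]
  push_neg at hdeg
  -- 1 ≤ θ ≤ M - 1 ; and M ≤ θ + K + 1 with K ≤ M - 2 forces θ ≥ 1; pivot vJ = M-1-θ ≤ K
  obtain ⟨t, rfl⟩ : ∃ t, θ = t + 1 := ⟨θ-1, by omega⟩
  simp only [Nat.add_sub_cancel]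
  have hsJ : (P.eraseIdx J).Pairwise (· ≤ ·) := sorted_eraseIdx hs J
  have hmJ : Mem01 (P.eraseIdx J) := mem01_eraseIdx hm J
  have e1 := HT (M-1) (by omega) (P.eraseIdx J) (by omega) hsJ hmJ t (by omega) (by omega)
  rcases eq_or_lt_of_le (show M - 1 - (t+1) ≤ K by omega) with hK1 | hK2
  · -- case: the pivot of P-J is exactly a = P[K]
    have e1' := e1.trans (term_congr f (P.eraseIdx J) _ _ hK1 (by omega) (by omega))
    have ea : (P.eraseIdx J)[K]'(by omega) = P[K]'hKP :=
      getElem_eraseIdx_lt P hKJ _ hKP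
    rw [ea] at e1'
    have i1 := cost_le_dev f (p := P.eraseIdx K) (θ := t) (j := J-1)
      (by omega) (by omega)
    have eb : (P.eraseIdx K)[J-1]'(by omega) = P[J]'hJP :=
      (getElem_eraseIdx_ge P (by omega) _ (by omega)).trans (getElem_congr' P (by omega) _ _)
    have eX : (P.eraseIdx K).eraseIdx (J-1) = (P.eraseIdx J).eraseIdx K :=
      (eraseIdx_eraseIdx P hKJ hJP).symm
    rw [eb, eX] at i1
    have h1 := mul_le_mul_of_nonneg_left i1 (show (0:ℝ) ≤ 1 - P[K]'hKP by linarith [haI.2])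
    have e1b := congrArg (fun z => (1 - P[J]'hJP) * z) e1'
    linarith [h1, e1b]
  · -- case: pivot w = P[vJ] with vJ < K
    have ht1 : 1 ≤ t := by omega
    obtain ⟨u, rfl⟩ : ∃ u, t = u + 1 := ⟨t-1, by omega⟩
    have hvJ : M - 1 - (u+1+1) < K := hK2
    have hwI := mem01_getElem hm (show M - 1 - (u+1+1) < P.length by omega)
    -- exact expansion of cost (u+1+1) (P-J) at its pivot
    have ew : (P.eraseIdx J)[M-1-(u+1+1)]'(by omega) = P[M-1-(u+1+1)]'(by omega) :=
      getElem_eraseIdx_lt P (by omega) _ (by omega)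
    have eL : (P.eraseIdx J).eraseIdx (M-1-(u+1+1)) = (P.eraseIdx (M-1-(u+1+1))).eraseIdx (J-1) :=
      eraseIdx_eraseIdx P (by omega) hJP
    rw [ew, eL] at e1
    -- deviation bound for cost (u+1+1) (P-K) at w
    have i1 := cost_le_dev f (p := P.eraseIdx K) (θ := u+1) (j := M-1-(u+1+1))
      (by omega) (by omega)
    have ew2 : (P.eraseIdx K)[M-1-(u+1+1)]'(by omega) = P[M-1-(u+1+1)]'(by omega) :=
      getElem_eraseIdx_lt P (by omega) _ (by omega)
    have eL2 : (P.eraseIdx K).eraseIdx (M-1-(u+1+1)) = (P.eraseIdx (M-1-(u+1+1))).eraseIdx (K-1) :=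
      eraseIdx_eraseIdx P (by omega) hKP
    rw [ew2, eL2] at i1
    -- induction hypothesis at context Q = P.eraseIdx vJ
    have hQlen : (P.eraseIdx (M-1-(u+1+1))).length = M - 1 := by
      rw [length_eraseIdx' (by omega)]; omega
    have hQs := sorted_eraseIdx hs (M-1-(u+1+1))
    have hQm := mem01_eraseIdx hm (M-1-(u+1+1))
    have HT' : ∀ l, l < M - 1 → TS f l := fun l hl => HT l (by omega)
    have eK : (P.eraseIdx (M-1-(u+1+1)))[K-1]'(by omega) = P[K]'hKP :=
      (getElem_eraseIdx_ge P (by omega) _ (by omega)).trans (getElem_congr' P (by omega) _ _)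
    have eJ : (P.eraseIdx (M-1-(u+1+1)))[J-1]'(by omega) = P[J]'hJP :=
      (getElem_eraseIdx_ge P (by omega) _ (by omega)).trans (getElem_congr' P (by omega) _ _)
    have i2 := ih (M-1) (by omega) HT' (P.eraseIdx (M-1-(u+1+1))) hQlen hQs hQm
      (K-1) (J-1) (u+1+1) (by omega) (by omega) (by omega)
    have i3 := ih (M-1) (by omega) HT' (P.eraseIdx (M-1-(u+1+1))) hQlen hQs hQm
      (K-1) (J-1) (u+1) (by omega) (by omega) (by omega)
    simp only [Nat.add_sub_cancel] at i2 i3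
    rw [eK, eJ] at i2 i3
    -- exact expansion of cost (u+1) S at its pivot (same w)
    have hSlen : ((P.eraseIdx J).eraseIdx K).length = M - 2 := by
      rw [length_eraseIdx' (by omega), hlenJ]; omega
    have e2 := HT (M-2) (by omega) ((P.eraseIdx J).eraseIdx K) (by omega)
      (sorted_eraseIdx hsJ K) hmS u (by omega) (by omega)
    have eSw : ((P.eraseIdx J).eraseIdx K)[M-2-(u+1)]'(by omega) = P[M-1-(u+1+1)]'(by omega) := by
      rw [getElem_eraseIdx_lt (P.eraseIdx J) (show M-2-(u+1) < K by omega) _ (by omega),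
        getElem_eraseIdx_lt P (show M-2-(u+1) < J by omega) _ (by omega)]
      exact getElem_congr' P (by omega) _ _
    rw [eSw] at e2
    have eSS : ((P.eraseIdx J).eraseIdx K).eraseIdx (M-2-(u+1))
        = ((P.eraseIdx (M-1-(u+1+1))).eraseIdx (J-1)).eraseIdx (K-1) := by
      rw [eraseIdx_eraseIdx (P.eraseIdx J) (show M-2-(u+1) < K by omega) (by omega),
        show M-2-(u+1) = M-1-(u+1+1) by omega, eL]
    rw [eSS] at e2
    -- assembly
    have h1 := mul_le_mul_of_nonneg_left i1 (show (0:ℝ) ≤ 1 - P[K]'hKP by linarith [haI.2])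
    have e1b := congrArg (fun z => (1 - P[J]'hJP) * z) e1
    have h3 := mul_le_mul_of_nonneg_left i3 hwI.1
    have h4 := mul_le_mul_of_nonneg_left i2
      (show (0:ℝ) ≤ 1 - P[M-1-(u+1+1)]'(by omega) by linarith [hwI.2])
    have e2b := congrArg (fun z => (P[J]'hJP - P[K]'hKP) * z) e2
    linarith [h1, e1b, h3, h4, e2b]

lemma OneSide (f : ℝ → ℝ) (hf0 : ∀ x ∈ Set.Icc (0:ℝ) 1, 0 ≤ f x)
    (hf_sym : ∀ x ∈ Set.Icc (0:ℝ) 1, f x = f (1 - x))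
    (hf_mono : AntitoneOn (fun x => f x / x) (Set.Ioc (0:ℝ) 1))
    (n : ℕ) (HT : ∀ l, l < n → TS f l)
    (q : List ℝ) (hq : q.length = n) (hs : q.Pairwise (· ≤ ·)) (hm : Mem01 q)
    (u j : ℕ) (h2 : u + 2 ≤ n) (hvj : n - (u+2) < j) (hj : j < q.length) :
    f (q[n-(u+2)]'(by omega)) + q[n-(u+2)]'(by omega) * cost f (u+1) (q.eraseIdx (n-(u+2)))
      + (1 - q[n-(u+2)]'(by omega)) * cost f (u+2) (q.eraseIdx (n-(u+2)))
    ≤ f (q[j]'hj) + q[j]'hj * cost f (u+1) (q.eraseIdx j)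
      + (1 - q[j]'hj) * cost f (u+2) (q.eraseIdx j) := by
  have hvq : n - (u+2) < q.length := by omega
  have hj1 : 1 ≤ j := by omega
  have hlenj : (q.eraseIdx j).length = n - 1 := by rw [length_eraseIdx' hj]; omega
  have hlenv : (q.eraseIdx (n-(u+2))).length = n - 1 := by rw [length_eraseIdx' hvq]; omega
  have haI := mem01_getElem hm hvq
  have hbI := mem01_getElem hm hj
  have hab : q[n-(u+2)]'hvq ≤ q[j]'hj := sorted_le hs (by omega) hj
  -- exact pivot expansion of cost (u+1) (q - j)
  have e1 := HT (n-1) (by omega) (q.eraseIdx j) (by omega)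
    (sorted_eraseIdx hs j) (mem01_eraseIdx hm j) u (by omega) (by omega)
  have e1' := e1.trans (term_congr f (q.eraseIdx j) _ _
    (show (n-1) - (u+1) = n - (u+2) by omega) (by omega) (by omega))
  have ev : (q.eraseIdx j)[n-(u+2)]'(by omega) = q[n-(u+2)]'hvq :=
    getElem_eraseIdx_lt q (by omega) _ hvq
  rw [ev] at e1'
  -- deviation bound for cost (u+2) (q - v) at b
  have i1 : cost f (u+1) (q.eraseIdx (n-(u+2)))
      ≤ f ((q.eraseIdx (n-(u+2)))[j-1]'(by omega))
        + ((q.eraseIdx (n-(u+2)))[j-1]'(by omega)) * cost f u ((q.eraseIdx (n-(u+2))).eraseIdx (j-1))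
        + (1 - (q.eraseIdx (n-(u+2)))[j-1]'(by omega)) * cost f (u+1) ((q.eraseIdx (n-(u+2))).eraseIdx (j-1)) :=
    cost_le_dev f (p := q.eraseIdx (n-(u+2))) (θ := u) (j := j-1) (by omega) (by omega)
  have eb : (q.eraseIdx (n-(u+2)))[j-1]'(by omega) = q[j]'hj := by
    rw [getElem_eraseIdx_ge q (show n-(u+2) ≤ j-1 by omega) (by rw [hlenv]; omega)
      (show j-1+1 < q.length by omega)]
    exact getElem_congr' q (by omega) _ _
  have eX : (q.eraseIdx (n-(u+2))).eraseIdx (j-1) = (q.eraseIdx j).eraseIdx (n-(u+2)) :=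
    (eraseIdx_eraseIdx q (by omega) hj).symm
  rw [eb, eX] at i1
  -- the L2 exchange inequality
  have i2 := L2 f hf0 hf_sym hf_mono n HT q hq hs hm (n-(u+2)) j (u+2)
    (by omega) (by omega) (by omega)
  rw [show (u+2) - 1 = u + 1 by omega] at i2
  -- assembly
  have h1 := mul_le_mul_of_nonneg_left i1 haI.1
  have e1b := congrArg (fun z => q[j]'hj * z) e1'
  linarith [h1, e1b, i2]

lemma Tmain (f : ℝ → ℝ) (hf0 : ∀ x ∈ Set.Icc (0:ℝ) 1, 0 ≤ f x)
    (hf_sym : ∀ x ∈ Set.Icc (0:ℝ) 1, f x = f (1 - x))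
    (hf_mono : AntitoneOn (fun x => f x / x) (Set.Ioc (0:ℝ) 1)) :
    ∀ n, TS f n := by
  intro n
  induction n using Nat.strong_induction_on with
  | _ n ih =>
  intro q hq hs hm t ht hv
  apply le_antisymm
  · exact cost_le_dev f (by omega) hv
  · apply le_cost f (by omega)
    intro j hj
    rcases lt_trichotomy j (n - (t+1)) with hlt | heq | hgt
    · -- j below the pivot: use duality
      have hjn : j < n := by omega
      have htn : t + 1 ≤ n - 1 := by omega
      have hdl : (dualL q).length = n := by rw [dualL_length, hq]
      have hds := dualL_sorted hs
      have hdm := dualL_mem01 hm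
      have d1 := dev_dual f hf_sym hm n hq (t := t) (j := j) ht hjn
      have d2 := dev_dual f hf_sym hm n hq (t := t) (j := n-(t+1)) ht (by omega)
      have os := OneSide f hf0 hf_sym hf_mono n ih (dualL q) hdl hds hdm
        (n-t-2) (n-1-j) (by omega) (by omega) (by rw [hdl]; omega)
      have c1 : cost f ((n-t-2)+1) = cost f (n-(t+1)) := by
        rw [show (n-t-2)+1 = n-(t+1) by omega]
      have c2 : cost f ((n-t-2)+2) = cost f (n-(t+1)+1) := by
        rw [show (n-t-2)+2 = n-(t+1)+1 by omega]
      rw [c1, c2] at os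
      have tc := term_congr f (dualL q) (n-(t+1)) (n-(t+1)+1)
        (show n - ((n-t-2)+2) = n - 1 - (n-(t+1)) by omega)
        (by rw [hdl]; omega) (by rw [hdl]; omega)
      linarith [d1, d2, os, tc]
    · exact le_of_eq (term_congr f q t (t+1) heq.symm hv hj)
    · -- j above the pivot
      have ht1 : 1 ≤ t := by omega
      obtain ⟨u, rfl⟩ : ∃ u, t = u + 1 := ⟨t-1, by omega⟩
      exact OneSide f hf0 hf_sym hf_mono n ih q hq hs hm u j (by omega) (by omega) hj

/-- Lemma 3 of the paper: for `0 ≤ k ≤ m-2` and `k+2 ≤ i ≤ m` (1-based indices),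
`p_{k+1} C_f(m-k-1; p_{-(k+1)}) - p_i C_f(m-k-1; p_{-i})` is bounded by
`(p_{k+1} - p_i) C_f(m-k-1; p_{-(k+1,i)}) + p_{k+1} f(p_i) - p_i f(p_{k+1})`. -/
theorem stmt_3 (f : ℝ → ℝ)
    (hf_nonneg : ∀ x ∈ Set.Icc (0:ℝ) 1, 0 ≤ f x)
    (hf_sym : ∀ x ∈ Set.Icc (0:ℝ) 1, f x = f (1 - x))
    (hf_mono : AntitoneOn (fun x => f x / x) (Set.Ioc (0:ℝ) 1))
    (m : ℕ) (p : Fin m → ℝ)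
    (hp0 : ∀ i, 0 ≤ p i) (hp1 : ∀ i, p i ≤ 1) (hsorted : Monotone p)
    (k i : ℕ) (hk : k + 2 ≤ m) (hki : k + 2 ≤ i) (him : i ≤ m) :
    p ⟨k, by omega⟩ * cost f (m - k - 1) ((List.ofFn p).eraseIdx k)
      - p ⟨i - 1, by omega⟩ * cost f (m - k - 1) ((List.ofFn p).eraseIdx (i - 1))
    ≤ (p ⟨k, by omega⟩ - p ⟨i - 1, by omega⟩) *
        cost f (m - k - 1) (((List.ofFn p).eraseIdx (i - 1)).eraseIdx k)
      + p ⟨k, by omega⟩ * f (p ⟨i - 1, by omega⟩)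
      - p ⟨i - 1, by omega⟩ * f (p ⟨k, by omega⟩) := by

  have hlen0 : (List.ofFn p).length = m := List.length_ofFn
  have hi1 : i - 1 < (List.ofFn p).length := by omega
  have hkm : k < (List.ofFn p).length := by omega
  have hs0 : (List.ofFn p).Pairwise (· ≤ ·) := by
    rw [List.pairwise_ofFn]
    intro a b hab; exact hsorted hab.le
  have hm0 : Mem01 (List.ofFn p) := by
    intro x hx
    rw [List.mem_ofFn] at hx
    obtain ⟨j, rfl⟩ := hx
    exact ⟨hp0 j, hp1 j⟩
  have hlen1 : ((List.ofFn p).eraseIdx (i-1)).length = m - 1 := by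
    rw [length_eraseIdx' hi1]; omega
  have hlen2 : ((List.ofFn p).eraseIdx k).length = m - 1 := by
    rw [length_eraseIdx' hkm]; omega
  rw [show m - k - 1 = (m-k-2)+1 by omega]
  -- exact pivot expansion of the cost over (ofFn p) minus entry (i-1)
  have e1 := Tmain f hf_nonneg hf_sym hf_mono (m-1) ((List.ofFn p).eraseIdx (i-1)) hlen1
    (sorted_eraseIdx hs0 (i-1)) (mem01_eraseIdx hm0 (i-1)) (m-k-2) (by omega)
    (by rw [hlen1]; omega)
  have e1' := e1.trans (term_congr f ((List.ofFn p).eraseIdx (i-1)) _ _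
    (show (m-1) - ((m-k-2)+1) = k by omega) (by rw [hlen1]; omega) (by rw [hlen1]; omega))
  have ea : ((List.ofFn p).eraseIdx (i-1))[k]'(by rw [hlen1]; omega) = p ⟨k, by omega⟩ := by
    rw [getElem_eraseIdx_lt (List.ofFn p) (show k < i-1 by omega) _ (by omega)]
    exact List.getElem_ofFn _
  rw [ea] at e1'
  -- deviation bound for the cost over (ofFn p) minus entry k
  have i1 : cost f ((m-k-2)+1) ((List.ofFn p).eraseIdx k)
      ≤ f (((List.ofFn p).eraseIdx k)[i-1-1]'(by rw [hlen2]; omega))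
        + (((List.ofFn p).eraseIdx k)[i-1-1]'(by rw [hlen2]; omega)) *
            cost f (m-k-2) (((List.ofFn p).eraseIdx k).eraseIdx (i-1-1))
        + (1 - ((List.ofFn p).eraseIdx k)[i-1-1]'(by rw [hlen2]; omega)) *
            cost f ((m-k-2)+1) (((List.ofFn p).eraseIdx k).eraseIdx (i-1-1)) :=
    cost_le_dev f (p := (List.ofFn p).eraseIdx k) (θ := m-k-2) (j := i-1-1)
      (by rw [hlen2]; omega) (by rw [hlen2]; omega)
  have eb : ((List.ofFn p).eraseIdx k)[i-1-1]'(by rw [hlen2]; omega) = p ⟨i-1, by omega⟩ := by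
    rw [getElem_eraseIdx_ge (List.ofFn p) (show k ≤ i-1-1 by omega) (by rw [hlen2]; omega)
      (show i-1-1+1 < (List.ofFn p).length by omega)]
    rw [getElem_congr' (List.ofFn p) (show i-1-1+1 = i-1 by omega) (by omega) (by omega)]
    exact List.getElem_ofFn _
  have eX : ((List.ofFn p).eraseIdx k).eraseIdx (i-1-1)
      = ((List.ofFn p).eraseIdx (i-1)).eraseIdx k :=
    (eraseIdx_eraseIdx (List.ofFn p) (show k < i-1 by omega) hi1).symm
  rw [eb, eX] at i1
  have h1 := mul_le_mul_of_nonneg_left i1 (hp0 ⟨k, by omega⟩)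
  have e1b := congrArg (fun z => p ⟨i-1, by omega⟩ * z) e1'
  linarith [h1, e1b]
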